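/- Set α^{(m)}_{k,L} := Σ_{l,l' ≥ 0, l+l' = L} α^{(m)}_{k,l,l'}. Then for all m ≥ 0, L ≥ 0 and 0 ≤ k ≤ m: if L is odd, α^{(m)}_{−k,L} = α^{(m)}_{k,L}; if L is even, (m+k) · α^{(m)}_{−k,L} = (m−k) · α^{(m)}_{k,L}. -/

import Mathlib

/-- The integers `α^{(m)}_{k,l,l'}`, defined by the recursion
`α^{(0)}_{k,l,l'} = δ_{k,0}δ_{l,0}δ_{l',0}`,
`α^{(m+1)}_{k,l,l'} = α^{(m)}_{k-1,l',l} + α^{(m)}_{-k,l',l-1}`, with `α^{(m)}_{k,l,l'} = 0`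
whenever `l < 0` or `l' < 0`. -/
def alternatingAlpha : ℕ → ℤ → ℤ → ℤ → ℤ
  | 0, k, l, l' => if k = 0 ∧ l = 0 ∧ l' = 0 then 1 else 0
  | m + 1, k, l, l' =>
      if l < 0 ∨ l' < 0 then 0
      else alternatingAlpha m (k - 1) l' l + alternatingAlpha m (-k) l' (l - 1)

/-- `α^{(m)}_{k,L} = Σ_{l+l' = L} α^{(m)}_{k,l,l'}`. -/
def alternatingAlphaL (m : ℕ) (k : ℤ) (L : ℕ) : ℤ :=
  ∑ l ∈ Finset.range (L + 1), alternatingAlpha m k (l : ℤ) ((L - l : ℕ) : ℤ)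

/- ### Auxiliary: closed form via compositions -/

/-- Number of ways to write `n` as an ordered sum of `p` nonnegative integers
(as an integer, `0` for `n < 0`). -/
def ccN (n p : ℕ) : ℤ :=
  if p = 0 then (if n = 0 then 1 else 0) else ((n + p - 1).choose n : ℤ)

def cc (n : ℤ) (p : ℕ) : ℤ := if 0 ≤ n then ccN n.toNat p else 0

/-- Closed form for `alternatingAlphaL`. -/
def Bdef (m : ℕ) (k : ℤ) (L : ℕ) : ℤ :=
  if ((m : ℤ) + L + k) % 2 = 0 then
    cc (((m : ℤ) - L + k) / 2) (L / 2 + 1) * cc (((m : ℤ) - L - k) / 2) ((L + 1) / 2)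
  else 0

lemma ccN_zero_left (p : ℕ) : ccN 0 p = 1 := by
  cases p with
  | zero => rfl
  | succ q => simp [ccN]

lemma ccN_pascal (n p : ℕ) : ccN (n + 1) (p + 1) = ccN n (p + 1) + ccN (n + 1) p := by
  cases p with
  | zero => simp [ccN]
  | succ q =>
    simp only [ccN, Nat.succ_ne_zero, if_false, Nat.add_eq, ite_false]
    have h1 : n + 1 + (q + 1 + 1) - 1 = (n + q + 1) + 1 := by omega
    have h2 : n + (q + 1 + 1) - 1 = n + q + 1 := by omega
    have h3 : n + 1 + (q + 1) - 1 = n + q + 1 := by omega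
    rw [h1, h2, h3, Nat.choose_succ_succ (n + q + 1) n]
    push_cast
    ring

lemma cc_pascal (n : ℤ) (p : ℕ) : cc n (p + 1) = cc (n - 1) (p + 1) + cc n p := by
  rcases lt_trichotomy n 0 with h | h | h
  · have h' : ¬ (0 ≤ n) := by omega
    have h'' : ¬ (0 ≤ n - 1) := by omega
    simp [cc, h', h'', show ¬ (1 ≤ n) by omega]
  · subst h
    have h'' : ¬ ((0:ℤ) ≤ 0 - 1) := by omega
    simp [cc, h'', ccN_zero_left]
  · have h0 : (0:ℤ) ≤ n := le_of_lt h
    have h1 : (0:ℤ) ≤ n - 1 := by omega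
    have h2 : n.toNat = (n - 1).toNat + 1 := by omega
    simp only [cc, if_pos h0, if_pos h1, h2]
    exact ccN_pascal _ _

lemma cc_zero_right (n : ℤ) : cc n 0 = if n = 0 then 1 else 0 := by
  unfold cc ccN
  by_cases h : 0 ≤ n
  · rw [if_pos h, if_pos rfl]
    by_cases h0 : n = 0
    · rw [if_pos h0, if_pos (by omega : n.toNat = 0)]
    · rw [if_neg h0, if_neg (by omega : ¬ n.toNat = 0)]
  · rw [if_neg h, if_neg (by omega : ¬ n = 0)]

lemma cc_one (n : ℤ) : cc n 1 = if 0 ≤ n then 1 else 0 := by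
  unfold cc ccN
  by_cases h : 0 ≤ n
  · rw [if_pos h, if_pos h, if_neg one_ne_zero]
    rw [Nat.add_sub_cancel, Nat.choose_self]
    rfl
  · rw [if_neg h, if_neg h]

lemma cc_key (n : ℤ) (h : ℕ) : (n + h) * cc n h = h * cc n (h + 1) := by
  by_cases hn : 0 ≤ n
  · cases h with
    | zero =>
      rw [cc_zero_right]
      split_ifs with h0
      · subst h0; simp
      · simp
    | succ g =>
      simp only [cc, if_pos hn]
      set a := n.toNat with ha
      have hna : n = (a : ℤ) := by omega
      rw [hna]
      simp only [ccN, Nat.succ_ne_zero, if_false, ite_false]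
      have h1 : a + (g + 1) - 1 = a + g := by omega
      have h2 : a + (g + 1 + 1) - 1 = a + g + 1 := by omega
      rw [h1, h2]
      have key : (a + g + 1) * (a + g).choose a = (g + 1) * (a + g + 1).choose a := by
        have s1 : (a + g).choose g = (a + g).choose a := by
          have := Nat.choose_symm (n := a + g) (k := a) (by omega)
          simpa [show a + g - a = g by omega] using this
        have s2 : (a + g + 1).choose (g + 1) = (a + g + 1).choose a := by
          have := Nat.choose_symm (n := a + g + 1) (k := a) (by omega)
          simpa [show a + g + 1 - a = g + 1 by omega] using this
        have h5 := Nat.add_one_mul_choose_eq (a + g) g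
        rw [s1] at h5
        rw [← s2, h5, Nat.mul_comm]
      have := congrArg (fun t : ℕ => (t : ℤ)) key
      push_cast at this ⊢
      linear_combination this
  · have h' : ¬ (0 ≤ n) := hn
    simp [cc, h']

lemma B_rec (m L : ℕ) (k : ℤ) :
    Bdef (m + 1) k L = Bdef m (k - 1) L + (if L = 0 then 0 else Bdef m (-k) (L - 1)) := by
  cases L with
  | zero =>
    rw [if_pos rfl, add_zero]
    unfold Bdef
    push_cast
    norm_num
    by_cases hq : (2:ℤ) ∣ (m : ℤ) + 1 + k
    · have hq2 : (2:ℤ) ∣ (m : ℤ) + (k - 1) := by omega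
      rw [if_pos hq, if_pos hq2]
      have e1 : ((m : ℤ) + (k - 1)) / 2 = ((m : ℤ) + 1 + k) / 2 - 1 := by omega
      have e2 : ((m : ℤ) - (k - 1)) / 2 = ((m : ℤ) + 1 - k) / 2 := by omega
      rw [e1, e2]
      set E := ((m : ℤ) + 1 + k) / 2 with hE
      set O := ((m : ℤ) + 1 - k) / 2 with hO
      have hEO : E + O = (m : ℤ) + 1 := by omega
      by_cases hO0 : O = 0
      · have hE1 : 1 ≤ E := by omega
        rw [cc_one, cc_one, if_pos (by omega : (0:ℤ) ≤ E), if_pos (by omega : (0:ℤ) ≤ E - 1)]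
      · rw [cc_zero_right, if_neg hO0]
        ring
    · have hq2 : ¬ (2:ℤ) ∣ (m : ℤ) + (k - 1) := by omega
      rw [if_neg hq, if_neg hq2]
  | succ N =>
    simp only [Nat.succ_ne_zero, if_false, Nat.succ_sub_one]
    unfold Bdef
    push_cast
    by_cases hq : ((m : ℤ) + 1 + (N + 1) + k) % 2 = 0
    · have hq2 : ((m : ℤ) + (N + 1) + (k - 1)) % 2 = 0 := by omega
      have hq3 : ((m : ℤ) + N + (-k)) % 2 = 0 := by omega
      rw [if_pos hq, if_pos hq2, if_pos hq3]
      have e1 : ((m : ℤ) - (N + 1) + (k - 1)) / 2 = ((m : ℤ) + 1 - (N + 1) + k) / 2 - 1 := by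
        omega
      have e2 : ((m : ℤ) - (N + 1) - (k - 1)) / 2 = ((m : ℤ) + 1 - (N + 1) - k) / 2 := by omega
      have e3 : ((m : ℤ) - N + (-k)) / 2 = ((m : ℤ) + 1 - (N + 1) - k) / 2 := by omega
      have e4 : ((m : ℤ) - N - (-k)) / 2 = ((m : ℤ) + 1 - (N + 1) + k) / 2 := by omega
      rw [e1, e2, e3, e4]
      set E := ((m : ℤ) + 1 - (N + 1) + k) / 2 with hE
      set O := ((m : ℤ) + 1 - (N + 1) - k) / 2 with hO
      rcases Nat.even_or_odd N with ⟨t, ht⟩ | ⟨t, ht⟩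
      · subst ht
        have p1 : (t + t + 1) / 2 + 1 = t + 1 := by omega
        have p2 : (t + t + 1 + 1) / 2 = t + 1 := by omega
        have p3 : (t + t) / 2 + 1 = t + 1 := by omega
        have p4 : (t + t + 1) / 2 = t := by omega
        rw [p1, p2, p3, p4, cc_pascal E t]
        ring
      · subst ht
        have p1 : (2 * t + 1 + 1) / 2 + 1 = t + 2 := by omega
        have p2 : (2 * t + 1 + 1 + 1) / 2 = t + 1 := by omega
        have p3 : (2 * t + 1) / 2 + 1 = t + 1 := by omega
        have p4 : (2 * t + 1 + 1) / 2 = t + 1 := by omega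
        rw [p1, p2, p3, p4, cc_pascal E (t + 1)]
        ring
    · have hq2 : ¬ ((m : ℤ) + (N + 1) + (k - 1)) % 2 = 0 := by omega
      have hq3 : ¬ ((m : ℤ) + N + (-k)) % 2 = 0 := by omega
      rw [if_neg hq, if_neg hq2, if_neg hq3]
      ring

lemma alpha_neg_right (m : ℕ) (k l : ℤ) : alternatingAlpha m k l (-1) = 0 := by
  cases m with
  | zero => simp [alternatingAlpha]
  | succ m => simp [alternatingAlpha]

lemma alphaL_succ (m L : ℕ) (k : ℤ) :
    alternatingAlphaL (m + 1) k L =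
      alternatingAlphaL m (k - 1) L +
        (if L = 0 then 0 else alternatingAlphaL m (-k) (L - 1)) := by
  unfold alternatingAlphaL
  have hstep : ∀ l ∈ Finset.range (L + 1),
      alternatingAlpha (m + 1) k (l : ℤ) ((L - l : ℕ) : ℤ) =
        alternatingAlpha m (k - 1) ((L - l : ℕ) : ℤ) (l : ℤ) +
          alternatingAlpha m (-k) ((L - l : ℕ) : ℤ) ((l : ℤ) - 1) := by
    intro l _
    have hc : ¬ ((l : ℤ) < 0 ∨ ((L - l : ℕ) : ℤ) < 0) := by
      push_neg
      constructor <;> positivity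
    simp only [alternatingAlpha, if_neg hc]
  rw [Finset.sum_congr rfl hstep, Finset.sum_add_distrib]
  congr 1
  · rw [← Finset.sum_range_reflect (fun l => alternatingAlpha m (k - 1) (l : ℤ) ((L - l : ℕ) : ℤ))
      (L + 1)]
    apply Finset.sum_congr rfl
    intro l hl
    simp only [Finset.mem_range] at hl
    have h2 : L + 1 - 1 - l = L - l := by omega
    have h3 : L - (L - l) = l := by omega
    simp only [h2, h3]
  · cases L with
    | zero =>
      simp only [if_pos rfl]
      rw [Finset.sum_range_one]
      simpa using alpha_neg_right m (-k) ((0 : ℕ) : ℤ)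
    | succ N =>
      simp only [Nat.succ_ne_zero, if_false, Nat.succ_sub_one]
      rw [Finset.sum_range_succ'
        (fun l => alternatingAlpha m (-k) ((N + 1 - l : ℕ) : ℤ) ((l : ℤ) - 1)) (N + 1)]
      have hz : alternatingAlpha m (-k) ((N + 1 - 0 : ℕ) : ℤ) (((0 : ℕ) : ℤ) - 1) = 0 := by
        simpa using alpha_neg_right m (-k) ((N + 1 : ℕ) : ℤ)
      rw [hz, add_zero]
      rw [← Finset.sum_range_reflect (fun l => alternatingAlpha m (-k) (l : ℤ) ((N - l : ℕ) : ℤ))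
        (N + 1)]
      apply Finset.sum_congr rfl
      intro l hl
      simp only [Finset.mem_range] at hl
      have h2 : N + 1 - (l + 1) = N - l := by omega
      have h3 : ((l + 1 : ℕ) : ℤ) - 1 = ((N - (N + 1 - 1 - l) : ℕ) : ℤ) := by
        push_cast [Nat.cast_sub (by omega : N + 1 - 1 - l ≤ N)]
        omega
      have h4 : N + 1 - 1 - l = N - l := by omega
      rw [h2, h3, h4]

lemma alphaL_eq_B (m : ℕ) : ∀ (L : ℕ) (k : ℤ), alternatingAlphaL m k L = Bdef m k L := by
  induction m with
  | zero =>
    intro L k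
    have hA : alternatingAlphaL 0 k L = if k = 0 ∧ L = 0 then 1 else 0 := by
      unfold alternatingAlphaL
      cases L with
      | zero =>
        rw [Finset.sum_range_one]
        simp [alternatingAlpha]
      | succ N =>
        rw [Finset.sum_eq_zero (f := fun l : ℕ => alternatingAlpha 0 k (l : ℤ) ((N + 1 - l : ℕ) : ℤ)), if_neg (by simp)]
        intro l hl
        simp only [Finset.mem_range] at hl
        simp only [alternatingAlpha]
        rw [if_neg]
        rintro ⟨-, h0, h0'⟩
        have : l = 0 := by exact_mod_cast h0
        subst this
        simp at h0'
        omega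
    rw [hA]
    unfold Bdef
    by_cases hk : k = 0 ∧ L = 0
    · obtain ⟨hk0, hL0⟩ := hk
      subst hk0; subst hL0
      norm_num [cc_one, cc_zero_right]
    · rw [if_neg hk]
      push_cast
      by_cases hp : ((0 : ℤ) + L + k) % 2 = 0
      · rw [if_pos hp]
        set E := ((0 : ℤ) - L + k) / 2 with hE
        set O := ((0 : ℤ) - L - k) / 2 with hO
        have hEO : E + O = -(L : ℤ) := by omega
        rcases lt_trichotomy E 0 with h | h | h
        · rw [cc, if_neg (by omega), zero_mul]
        · have hOv : O = -(L : ℤ) := by omega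
          rcases Nat.eq_zero_or_pos L with hL | hL
          · -- L = 0, so O = 0, E = 0 hence k = 0, contradiction with hk
            exfalso
            apply hk
            constructor
            · omega
            · exact hL
          · have : O < 0 := by omega
            rw [mul_comm, cc, if_neg (by omega), zero_mul]
        · have : O < 0 := by omega
          rw [mul_comm, cc, if_neg (by omega), zero_mul]
      · rw [if_neg hp]
  | succ m ih =>
    intro L k
    rw [alphaL_succ]
    simp only [ih]
    rw [B_rec]

lemma B_odd (m L : ℕ) (k : ℤ) (hL : L % 2 = 1) : Bdef m (-k) L = Bdef m k L := by
  unfold Bdef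
  by_cases hp : ((m : ℤ) + L + k) % 2 = 0
  · have hp2 : ((m : ℤ) + L + (-k)) % 2 = 0 := by omega
    rw [if_pos hp, if_pos hp2]
    obtain ⟨t, ht⟩ : ∃ t, L = 2 * t + 1 := ⟨L / 2, by omega⟩
    subst ht
    have p1 : (2 * t + 1) / 2 + 1 = t + 1 := by omega
    have p2 : (2 * t + 1 + 1) / 2 = t + 1 := by omega
    rw [p1, p2]
    have e1 : ((m : ℤ) - (2 * t + 1 : ℕ) + (-k)) / 2 = ((m : ℤ) - (2 * t + 1 : ℕ) - k) / 2 := by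
      push_cast; omega
    have e2 : ((m : ℤ) - (2 * t + 1 : ℕ) - (-k)) / 2 = ((m : ℤ) - (2 * t + 1 : ℕ) + k) / 2 := by
      push_cast; omega
    rw [e1, e2]
    ring
  · have hp2 : ¬ ((m : ℤ) + L + (-k)) % 2 = 0 := by omega
    rw [if_neg hp, if_neg hp2]

lemma B_even (m L : ℕ) (k : ℤ) (hL : L % 2 = 0) :
    ((m : ℤ) + k) * Bdef m (-k) L = ((m : ℤ) - k) * Bdef m k L := by
  unfold Bdef
  by_cases hp : ((m : ℤ) + L + k) % 2 = 0
  · have hp2 : ((m : ℤ) + L + (-k)) % 2 = 0 := by omega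
    rw [if_pos hp, if_pos hp2]
    obtain ⟨t, ht⟩ : ∃ t, L = 2 * t := ⟨L / 2, by omega⟩
    subst ht
    have p1 : (2 * t) / 2 + 1 = t + 1 := by omega
    have p2 : (2 * t + 1) / 2 = t := by omega
    rw [p1, p2]
    have e1 : ((m : ℤ) - (2 * t : ℕ) + (-k)) / 2 = ((m : ℤ) - (2 * t : ℕ) - k) / 2 := by
      push_cast; omega
    have e2 : ((m : ℤ) - (2 * t : ℕ) - (-k)) / 2 = ((m : ℤ) - (2 * t : ℕ) + k) / 2 := by
      push_cast; omega
    rw [e1, e2]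
    set E := ((m : ℤ) - (2 * t : ℕ) + k) / 2 with hE
    set O := ((m : ℤ) - (2 * t : ℕ) - k) / 2 with hO
    have hmk : (m : ℤ) + k = 2 * (E + (t : ℤ)) := by
      have : (2 * t : ℕ) = ((2 * t : ℕ) : ℤ) := rfl
      push_cast at hE ⊢
      omega
    have hmk' : (m : ℤ) - k = 2 * (O + (t : ℤ)) := by
      push_cast at hO ⊢
      omega
    rw [hmk, hmk']
    have k1 := cc_key E t
    have k2 := cc_key O t
    calc 2 * ((E : ℤ) + t) * (cc O (t + 1) * cc E t)
        = 2 * cc O (t + 1) * ((E + t) * cc E t) := by ring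
      _ = 2 * cc O (t + 1) * (t * cc E (t + 1)) := by rw [k1]
      _ = 2 * cc E (t + 1) * ((O + t) * cc O t) := by rw [k2]; ring
      _ = 2 * (O + t) * (cc E (t + 1) * cc O t) := by ring
  · have hp2 : ¬ ((m : ℤ) + L + (-k)) % 2 = 0 := by omega
    rw [if_neg hp, if_neg hp2]
    ring

/-- For `0 ≤ k ≤ m`: if `L` is odd then `α^{(m)}_{−k,L} = α^{(m)}_{k,L}`, and if `L` is
even then `(m+k)·α^{(m)}_{−k,L} = (m−k)·α^{(m)}_{k,L}`. -/
theorem alternatingAlphaL_symmetry (m L k : ℕ) (hk : k ≤ m) :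
    (L % 2 = 1 → alternatingAlphaL m (-(k : ℤ)) L = alternatingAlphaL m (k : ℤ) L) ∧
    (L % 2 = 0 → ((m : ℤ) + k) * alternatingAlphaL m (-(k : ℤ)) L =
      ((m : ℤ) - k) * alternatingAlphaL m (k : ℤ) L) := by
  constructor
  · intro hL
    rw [alphaL_eq_B, alphaL_eq_B]
    exact B_odd m L (k : ℤ) hL
  · intro hL
    rw [alphaL_eq_B, alphaL_eq_B]
    exact B_even m L (k : ℤ) hL
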